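/- Let U be an unbalanced critical two-dimensional update family, with the fixed set S_U of four stable directions and constant κ. Then there exists a constant c > 0 (depending only on U) such that every S_U-droplet D internally spanned by A ⊆ ℤ² satisfies |D ∩ A| ≥ c·diam(D), where diam(D) := max{‖x−y‖₂ : x,y ∈ D}. -/

import Mathlib

open MeasureTheory Filter Set

namespace BP

/-- A site of the two-dimensional lattice `ℤ²`. -/
abbrev Site := ℤ × ℤ

/-- One step of the `U`-bootstrap process: a site becomes infected if some update rule,
translated by it, is already entirely infected. -/
def step (U : Finset (Finset Site)) (A : Set Site) : Set Site :=
  A ∪ {x : Site | ∃ X ∈ U, ∀ y ∈ X, x + y ∈ A}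

/-- The sets `A_t` of the `U`-bootstrap process. -/
def iter (U : Finset (Finset Site)) (A : Set Site) : ℕ → Set Site
  | 0 => A
  | t + 1 => step U (iter U A t)

/-- The closure `[A]` of `A` under the `U`-bootstrap process. -/
def bclosure (U : Finset (Finset Site)) (A : Set Site) : Set Site :=
  ⋃ t : ℕ, iter U A t

/-- The inner product of a site with a real vector. -/
noncomputable def ip (x : Site) (u : ℝ × ℝ) : ℝ := (x.1 : ℝ) * u.1 + (x.2 : ℝ) * u.2

/-- The inner product of two real vectors. -/
noncomputable def ipR (v w : ℝ × ℝ) : ℝ := v.1 * w.1 + v.2 * w.2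

/-- `u` is a unit vector, i.e. an element of `S¹`. -/
def unitVec (u : ℝ × ℝ) : Prop := u.1 ^ 2 + u.2 ^ 2 = 1

/-- The discrete half-plane `H_u = {x : ⟨x,u⟩ < 0}`. -/
def halfPlane (u : ℝ × ℝ) : Set Site := {x : Site | ip x u < 0}

/-- `u` is a stable direction for `U`: the half-plane `H_u` is closed under the process. -/
def IsStable (U : Finset (Finset Site)) (u : ℝ × ℝ) : Prop :=
  bclosure U (halfPlane u) = halfPlane u

/-- The stable set `S = S(U)`, as a set of unit vectors. -/
def stableSet (U : Finset (Finset Site)) : Set (ℝ × ℝ) :=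
  {u | unitVec u ∧ IsStable U u}

/-- The discrete line `ℓ_u` through the origin perpendicular to `u`. -/
def line (u : ℝ × ℝ) : Set Site := {x | ip x u = 0}

/-- The perpendicular vector pointing to the right as one looks in the direction `u`. -/
def rightPerp (u : ℝ × ℝ) : ℝ × ℝ := (u.2, -u.1)

/-- `ℓ_u⁺`: the origin together with the sites of `ℓ_u` to the right of the origin
(as one looks in the direction `u`). -/
def linePlus (u : ℝ × ℝ) : Set Site := {x | ip x u = 0 ∧ 0 ≤ ip x (rightPerp u)}

/-- `ℓ_u⁻`: the origin together with the sites of `ℓ_u` to the left of the origin. -/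
def lineMinus (u : ℝ × ℝ) : Set Site := {x | ip x u = 0 ∧ ip x (rightPerp u) ≤ 0}

/-- `α⁺(u)`: the minimum cardinality of a finite set `Z ⊆ ℤ²` such that `[H_u ∪ Z]`
contains infinitely many sites of `ℓ_u⁺` (and `⊤ = ∞` if there is no such set). -/
noncomputable def alphaPlus (U : Finset (Finset Site)) (u : ℝ × ℝ) : ℕ∞ :=
  sInf {n : ℕ∞ | ∃ Z : Finset Site, (Z.card : ℕ∞) = n ∧
    (bclosure U (halfPlane u ∪ ↑Z) ∩ linePlus u).Infinite}

/-- `α⁻(u)`: as `α⁺(u)`, but for `ℓ_u⁻`. -/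
noncomputable def alphaMinus (U : Finset (Finset Site)) (u : ℝ × ℝ) : ℕ∞ :=
  sInf {n : ℕ∞ | ∃ Z : Finset Site, (Z.card : ℕ∞) = n ∧
    (bclosure U (halfPlane u ∪ ↑Z) ∩ lineMinus u).Infinite}

/-- The difficulty `α(u)` of a direction `u`: `min {α⁺(u), α⁻(u)}` if both are finite,
and `∞` otherwise. -/
noncomputable def difficulty (U : Finset (Finset Site)) (u : ℝ × ℝ) : ℕ∞ :=
  if alphaPlus U u ≠ ⊤ ∧ alphaMinus U u ≠ ⊤ then min (alphaPlus U u) (alphaMinus U u)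
  else ⊤

/-- `ᾱ(u) = min {α⁺(u), α⁻(u)}`. -/
noncomputable def alphaBar (U : Finset (Finset Site)) (u : ℝ × ℝ) : ℕ∞ :=
  min (alphaPlus U u) (alphaMinus U u)

/-- The difficulty `α = α(U)` of the update family `U`: the minimum over open
semicircles `C` of the maximum of `α(u)` over `u ∈ C`.  (An open semicircle is
parametrised by its midpoint `w`.) -/
noncomputable def famDifficulty (U : Finset (Finset Site)) : ℕ∞ :=
  ⨅ (w : ℝ × ℝ) (_ : unitVec w),
    ⨆ (u : ℝ × ℝ) (_ : unitVec u) (_ : 0 < ipR u w), difficulty U u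

/-- `U` is critical: some (closed) semicircle has finite intersection with the stable
set, and every open semicircle meets the stable set. -/
def Critical (U : Finset (Finset Site)) : Prop :=
  (∃ w : ℝ × ℝ, unitVec w ∧ (stableSet U ∩ {u | 0 ≤ ipR u w}).Finite) ∧
  (∀ w : ℝ × ℝ, unitVec w → (stableSet U ∩ {u | 0 < ipR u w}).Nonempty)

/-- The balancedness condition: some closed semicircle `C` has `α(u) ≤ α(U)`
for every `u ∈ C`.  A critical family is balanced iff this holds, unbalanced otherwise. -/
def BalancedCond (U : Finset (Finset Site)) : Prop :=
  ∃ w : ℝ × ℝ, unitVec w ∧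
    ∀ u : ℝ × ℝ, unitVec u → 0 ≤ ipR u w → difficulty U u ≤ famDifficulty U

/-- The time `τ` at which the origin is infected (`⊤ = ∞` if it never is). -/
noncomputable def tau (U : Finset (Finset Site)) (A : Set Site) : ℕ∞ :=
  ⨅ (t : ℕ) (_ : (0 : Site) ∈ iter U A t), (t : ℕ∞)

/-- Configurations of initially infected sites in the plane. -/
abbrev Config := Site → Bool

/-- The set of initially infected sites of a configuration. -/
def initSet (ω : Config) : Set Site := {x | ω x = true}

/-- `μ` is the product Bernoulli(`p`) measure (law of a "`p`-random set"): a probability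
measure giving every cylinder event its product probability. -/
def IsBernoulliProduct {ι : Type*} (p : ℝ) (μ : Measure (ι → Bool)) : Prop :=
  IsProbabilityMeasure μ ∧
    ∀ S : Finset ι, ∀ f : ι → Bool,
      μ {ω | ∀ x ∈ S, ω x = f x} =
        ∏ x ∈ S, if f x then ENNReal.ofReal p else ENNReal.ofReal (1 - p)

/-- Reduction of a site modulo `n`, giving a point of the torus `ℤ_n²`. -/
def projT (n : ℕ) (y : Site) : ZMod n × ZMod n := ((y.1 : ZMod n), (y.2 : ZMod n))

/-- One step of the `U`-bootstrap process on the torus `ℤ_n²`. -/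
def stepT (n : ℕ) (U : Finset (Finset Site)) (A : Set (ZMod n × ZMod n)) :
    Set (ZMod n × ZMod n) :=
  A ∪ {x | ∃ X ∈ U, ∀ y ∈ X, x + projT n y ∈ A}

/-- The sets `A_t` of the `U`-bootstrap process on the torus. -/
def iterT (n : ℕ) (U : Finset (Finset Site)) (A : Set (ZMod n × ZMod n)) :
    ℕ → Set (ZMod n × ZMod n)
  | 0 => A
  | t + 1 => stepT n U (iterT n U A t)

/-- The closure of `A` under the `U`-bootstrap process on the torus. -/
def bclosureT (n : ℕ) (U : Finset (Finset Site)) (A : Set (ZMod n × ZMod n)) :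
    Set (ZMod n × ZMod n) :=
  ⋃ t : ℕ, iterT n U A t

/-- `A` percolates on the torus `ℤ_n²`. -/
def PercolatesT (n : ℕ) (U : Finset (Finset Site)) (A : Set (ZMod n × ZMod n)) : Prop :=
  bclosureT n U A = Set.univ

/-- The critical probability `p_c(ℤ_n², U)`, where `P` is the family of product
Bernoulli measures on subsets of the torus. -/
noncomputable def pcT (n : ℕ) (U : Finset (Finset Site))
    (P : ℝ → Measure ((ZMod n × ZMod n) → Bool)) : ℝ :=
  sInf {p : ℝ | p ∈ Set.Icc (0 : ℝ) 1 ∧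
    1 / 2 ≤ P p {ω | PercolatesT n U {x | ω x = true}}}

/-- The Euclidean (`ℓ₂`) distance between two sites. -/
noncomputable def dist2 (x y : Site) : ℝ :=
  Real.sqrt ((((x.1 - y.1 : ℤ) : ℝ)) ^ 2 + (((x.2 - y.2 : ℤ) : ℝ)) ^ 2)

/-- A set of sites is (strongly) connected in the graph `G_κ` joining sites at
Euclidean distance at most `κ`. -/
def Conn (κ : ℝ) (S : Set Site) : Prop :=
  ∀ x ∈ S, ∀ y ∈ S,
    Relation.ReflTransGen (fun a b : Site => b ∈ S ∧ dist2 a b ≤ κ) x y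

/-- The range `ν` of the update family:
`ν = max {‖x − y‖₂ : x, y ∈ X ∪ {0}, X ∈ U}`. -/
noncomputable def nu (U : Finset (Finset Site)) : ℝ :=
  sSup {d : ℝ | ∃ X ∈ U, ∃ x ∈ insert (0 : Site) X, ∃ y ∈ insert (0 : Site) X,
    d = dist2 x y}

/-- The diameter of a set of sites. -/
noncomputable def diam2 (K : Set Site) : ℝ :=
  sSup {d : ℝ | ∃ x ∈ K, ∃ y ∈ K, d = dist2 x y}

/-- The projection `π(K, u) = max {|⟨x − y, u⟩| : x, y ∈ K}`. -/
noncomputable def proj (K : Set Site) (u : ℝ × ℝ) : ℝ :=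
  sSup {d : ℝ | ∃ x ∈ K, ∃ y ∈ K, d = |ip x u - ip y u|}

/-- A `T`-droplet: a nonempty intersection of translated half-planes `H_u + a_u`,
`u ∈ T`. -/
def IsDroplet (T : Set (ℝ × ℝ)) (D : Set Site) : Prop :=
  D.Nonempty ∧ ∃ a : (ℝ × ℝ) → Site, D = ⋂ u ∈ T, {x : Site | ip (x - a u) u < 0}

/-- `D` is the smallest `T`-droplet containing `K`. -/
def IsMinDroplet (T : Set (ℝ × ℝ)) (K D : Set Site) : Prop :=
  IsDroplet T D ∧ K ⊆ D ∧ ∀ D' : Set Site, IsDroplet T D' → K ⊆ D' → D ⊆ D'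

/-- An `a`-cluster: a strongly connected set of `a` sites. -/
def IsCluster (κ : ℝ) (a : ℕ) (B : Finset Site) : Prop :=
  B.card = a ∧ Conn κ ↑B

/-- One step of the `α`-covering algorithm: two droplets of the current collection lying
within strong-connectivity reach of a common translate of `D̂` are replaced by the
smallest `S_B`-droplet containing their union. -/
inductive CoverStep (SB : Set (ℝ × ℝ)) (κ : ℝ) (Dhat : Set Site) :
    Multiset (Set Site) → Multiset (Set Site) → Prop
  | merge (rest : Multiset (Set Site)) (D₁ D₂ D' : Set Site) (x : Site) :
      Conn κ (D₁ ∪ D₂ ∪ ((fun z => z + x) '' Dhat)) →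
      IsMinDroplet SB (D₁ ∪ D₂) D' →
      CoverStep SB κ Dhat (D₁ ::ₘ D₂ ::ₘ rest) (D' ::ₘ rest)

/-- `𝒟` is an `α`-cover of `K`: a possible output of the `α`-covering algorithm, started
from a maximal collection of pairwise disjoint `a`-clusters of `K`, each contained in a
translate of `D̂`. -/
def IsAlphaCover (κ : ℝ) (a : ℕ) (SB : Set (ℝ × ℝ)) (Dhat : Set Site)
    (K : Set Site) (𝒟 : Multiset (Set Site)) : Prop :=
  ∃ B : List (Finset Site), ∃ c : List Site,
    B.length = c.length ∧
    (∀ Bi ∈ B, IsCluster κ a Bi ∧ ↑Bi ⊆ K) ∧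
    B.Pairwise (fun B₁ B₂ => Disjoint B₁ B₂) ∧
    (∀ B' : Finset Site, IsCluster κ a B' → ↑B' ⊆ K → ∃ Bi ∈ B, ¬ Disjoint B' Bi) ∧
    (∀ i : ℕ, ∀ h₁ : i < B.length, ∀ h₂ : i < c.length,
      ↑(B.get ⟨i, h₁⟩) ⊆ (fun z => z + c.get ⟨i, h₂⟩) '' Dhat) ∧
    Relation.ReflTransGen (CoverStep SB κ Dhat)
      ↑(c.map fun v => (fun z => z + v) '' Dhat) 𝒟

/-- The droplet `D` is `α`-covered (with respect to the initial set `A`). -/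
def AlphaCovered (κ : ℝ) (a : ℕ) (SB : Set (ℝ × ℝ)) (Dhat : Set Site)
    (A D : Set Site) : Prop :=
  IsAlphaCover κ a SB Dhat (D ∩ A) {D}

/-- The constant `ρ` used for balanced families:
`ρ = max {‖y − Z‖₂ : u ∈ S_B, |Z| = α − 1, y ∈ [H_u ∪ Z] ∖ H_u}`. -/
noncomputable def rho (U : Finset (Finset Site)) (SB : Set (ℝ × ℝ)) (a : ℕ) : ℝ :=
  sSup {d : ℝ | ∃ u ∈ SB, ∃ Z : Finset Site, Z.card = a - 1 ∧
    ∃ y ∈ bclosure U (halfPlane u ∪ ↑Z) \ halfPlane u,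
      d = sInf {r : ℝ | ∃ z ∈ Z, r = dist2 y z}}

/-- The connectivity constant `κ = 2(ρ + ν)` for balanced families. -/
noncomputable def kappaB (U : Finset (Finset Site)) (SB : Set (ℝ × ℝ)) (a : ℕ) : ℝ :=
  2 * (rho U SB a + nu U)

/-- A valid choice of the finite set `S_B` of stable directions for a balanced family:
`ᾱ(u) ≥ α` for all `u ∈ S_B`, and `S_B` meets every open semicircle. -/
def ValidSB (U : Finset (Finset Site)) (a : ℕ) (SB : Set (ℝ × ℝ)) : Prop :=
  SB.Finite ∧ SB ⊆ stableSet U ∧ (∀ u ∈ SB, (a : ℕ∞) ≤ alphaBar U u) ∧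
  ∀ w : ℝ × ℝ, unitVec w → ∃ u ∈ SB, 0 < ipR u w

/-- `D` is internally spanned by `A`: some strongly connected subset `L` of `[D ∩ A]`
has `D` as the smallest `T`-droplet containing it. -/
def InternallySpanned (U : Finset (Finset Site)) (T : Set (ℝ × ℝ)) (κ : ℝ)
    (A D : Set Site) : Prop :=
  ∃ L : Set Site, L ⊆ bclosure U (D ∩ A) ∧ Conn κ L ∧ IsMinDroplet T L D

/-- A valid choice of the set `S_U = {u*, −u*, u^l, u^r}` of stable directions for an
unbalanced family: `min {α(u*), α(−u*)} ≥ α + 1`, `u^l` (resp. `u^r`) lies in the open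
semicircle to the left (resp. right) of `u*`, and `min {ᾱ(u^l), ᾱ(u^r)} = α`. -/
def ValidSU (U : Finset (Finset Site)) (a : ℕ) (ustar ul ur : ℝ × ℝ) : Prop :=
  ustar ∈ stableSet U ∧ -ustar ∈ stableSet U ∧ ul ∈ stableSet U ∧ ur ∈ stableSet U ∧
  (a : ℕ∞) + 1 ≤ difficulty U ustar ∧ (a : ℕ∞) + 1 ≤ difficulty U (-ustar) ∧
  0 < ipR ul (-ustar.2, ustar.1) ∧ 0 < ipR ur (ustar.2, -ustar.1) ∧
  min (alphaBar U ul) (alphaBar U ur) = (a : ℕ∞)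

/-- The point of `S¹` at angle `θ`. -/
noncomputable def circlePt (θ : ℝ) : ℝ × ℝ := (Real.cos θ, Real.sin θ)

/-- `u` is a rational direction: it is parallel to a nonzero integer vector,
i.e. it has rational or infinite slope. -/
def RationalDir (u : ℝ × ℝ) : Prop :=
  ∃ x : Site, x ≠ 0 ∧ (x.1 : ℝ) * u.2 = (x.2 : ℝ) * u.1

/-- The closed arc of directions from `u` to `v` (anticlockwise). -/
def arcFrom (u v : ℝ × ℝ) : Set (ℝ × ℝ) :=
  {w | ∃ θ₁ θ₂ θ : ℝ, circlePt θ₁ = u ∧ circlePt θ₂ = v ∧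
    θ₁ ≤ θ₂ ∧ θ₂ < θ₁ + 2 * Real.pi ∧ θ ∈ Set.Icc θ₁ θ₂ ∧ circlePt θ = w}

/-- `u` and `v` are consecutive elements of `T`:
`u ≠ v` and `T ∩ [u, v] = {u, v}`. -/
def ConsecutiveIn (T : Set (ℝ × ℝ)) (u v : ℝ × ℝ) : Prop :=
  u ≠ v ∧ T ∩ arcFrom u v = {u, v}

section AuxExtremal

lemma ip_add (x y : Site) (w : ℝ × ℝ) : ip (x + y) w = ip x w + ip y w := by
  simp only [ip, Prod.fst_add, Prod.snd_add]
  push_cast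
  ring

lemma ip_sub (x y : Site) (w : ℝ × ℝ) : ip (x - y) w = ip x w - ip y w := by
  simp only [ip, Prod.fst_sub, Prod.snd_sub]
  push_cast
  ring

lemma ip_zero (w : ℝ × ℝ) : ip (0 : Site) w = 0 := by
  simp [ip]

lemma dist2_nonneg (x y : Site) : 0 ≤ dist2 x y := Real.sqrt_nonneg _

lemma dist2_comm (x y : Site) : dist2 x y = dist2 y x := by
  unfold dist2
  congr 1
  push_cast
  ring

lemma dist2_add_left (z x y : Site) : dist2 (z + x) (z + y) = dist2 x y := by
  unfold dist2
  congr 1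
  simp only [Prod.fst_add, Prod.snd_add]
  push_cast
  ring

lemma sqrt_le_abs_add_abs (A B : ℝ) : Real.sqrt (A ^ 2 + B ^ 2) ≤ |A| + |B| := by
  have h1 : A ^ 2 + B ^ 2 ≤ (|A| + |B|) ^ 2 := by
    nlinarith [abs_nonneg A, abs_nonneg B, sq_abs A, sq_abs B, mul_nonneg (abs_nonneg A) (abs_nonneg B)]
  calc Real.sqrt (A ^ 2 + B ^ 2) ≤ Real.sqrt ((|A| + |B|) ^ 2) := Real.sqrt_le_sqrt h1
    _ = |A| + |B| := by
        rw [Real.sqrt_sq (by positivity)]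

lemma abs_ip_le (x y : Site) (w : ℝ × ℝ) (hw : unitVec w) :
    |ip x w - ip y w| ≤ dist2 x y := by
  unfold unitVec at hw
  set a : ℝ := ((x.1 - y.1 : ℤ) : ℝ) with ha
  set b : ℝ := ((x.2 - y.2 : ℤ) : ℝ) with hb
  have hab : ip x w - ip y w = a * w.1 + b * w.2 := by
    simp only [ip, ha, hb]
    push_cast
    ring
  have h1 : (a * w.1 + b * w.2) ^ 2 ≤ a ^ 2 + b ^ 2 := by
    nlinarith [sq_nonneg (a * w.2 - b * w.1)]
  rw [hab]
  unfold dist2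
  calc |a * w.1 + b * w.2| = Real.sqrt ((a * w.1 + b * w.2) ^ 2) := (Real.sqrt_sq_eq_abs _).symm
    _ ≤ Real.sqrt (a ^ 2 + b ^ 2) := Real.sqrt_le_sqrt h1

lemma finite_of_ball (S : Set Site) (x₁ : Site) (R : ℝ)
    (h : ∀ x ∈ S, dist2 x x₁ ≤ R) : S.Finite := by
  rcases S.eq_empty_or_nonempty with rfl | ⟨z, hz⟩
  · exact Set.finite_empty
  have hR : 0 ≤ R := le_trans (dist2_nonneg z x₁) (h z hz)
  apply Set.Finite.subset
    ((Finset.Icc (x₁.1 - ⌈R⌉) (x₁.1 + ⌈R⌉) ×ˢ Finset.Icc (x₁.2 - ⌈R⌉) (x₁.2 + ⌈R⌉)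
      : Finset Site).finite_toSet)
  intro x hx
  have hd := h x hx
  unfold dist2 at hd
  have h1 : |((x.1 - x₁.1 : ℤ) : ℝ)| ≤ R := by
    rw [← Real.sqrt_sq_eq_abs]
    refine le_trans (Real.sqrt_le_sqrt ?_) hd
    nlinarith [sq_nonneg ((x.2 - x₁.2 : ℤ) : ℝ)]
  have h2 : |((x.2 - x₁.2 : ℤ) : ℝ)| ≤ R := by
    rw [← Real.sqrt_sq_eq_abs]
    refine le_trans (Real.sqrt_le_sqrt ?_) hd
    nlinarith [sq_nonneg ((x.1 - x₁.1 : ℤ) : ℝ)]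
  rw [← Int.cast_abs] at h1 h2
  have h1' : |x.1 - x₁.1| ≤ ⌈R⌉ := by exact_mod_cast le_trans h1 (Int.le_ceil R)
  have h2' : |x.2 - x₁.2| ≤ ⌈R⌉ := by exact_mod_cast le_trans h2 (Int.le_ceil R)
  simp only [Finset.coe_product, Set.mem_prod, Finset.mem_coe, Finset.mem_Icc]
  rw [abs_le] at h1' h2'
  omega

lemma stable_F1 {U : Finset (Finset Site)} {w : ℝ × ℝ} (hst : IsStable U w) :
    ∀ X ∈ U, ∃ y ∈ X, 0 ≤ ip y w := by
  intro X hX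
  by_contra h
  push_neg at h
  have h0 : (0 : Site) ∈ step U (halfPlane w) := by
    refine Or.inr ⟨X, hX, fun y hy => ?_⟩
    have hy' := h y hy
    simp only [halfPlane, Set.mem_setOf_eq, ip_add, ip_zero, zero_add]
    linarith
  have h1 : (0 : Site) ∈ bclosure U (halfPlane w) := by
    exact Set.mem_iUnion.2 ⟨1, h0⟩
  rw [hst] at h1
  simp [halfPlane, ip_zero] at h1

noncomputable def Msup (w : ℝ × ℝ) (S : Set Site) : ℝ := sSup ((fun z => ip z w) '' S)

lemma le_Msup {S : Set Site} (hfin : S.Finite) {z : Site} (hz : z ∈ S) (w : ℝ × ℝ) :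
    ip z w ≤ Msup w S :=
  le_csSup ((hfin.image _).bddAbove) ⟨z, hz, rfl⟩

lemma Msup_le {S : Set Site} (hne : S.Nonempty) {w : ℝ × ℝ} {c : ℝ}
    (h : ∀ z ∈ S, ip z w ≤ c) : Msup w S ≤ c :=
  csSup_le (hne.image _) (by rintro _ ⟨z, hz, rfl⟩; exact h z hz)

lemma Msup_union {S T : Set Site} (hSf : S.Finite) (hSne : S.Nonempty) (hTf : T.Finite)
    (hTne : T.Nonempty) (w : ℝ × ℝ) :
    Msup w (S ∪ T) = max (Msup w S) (Msup w T) := by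
  unfold Msup
  rw [Set.image_union]
  rw [csSup_union ((hSf.image _).bddAbove) (hSne.image _) ((hTf.image _).bddAbove)
    (hTne.image _)]

lemma Msup_singleton (z : Site) (w : ℝ × ℝ) : Msup w {z} = ip z w := by
  unfold Msup
  rw [Set.image_singleton, csSup_singleton]

lemma iter_halfplane {U : Finset (Finset Site)} {w : ℝ × ℝ} {c : ℝ}
    (hF1w : ∀ X ∈ U, ∃ y ∈ X, 0 ≤ ip y w) {A : Set Site}
    (hA : ∀ x ∈ A, ip x w < c) : ∀ t, ∀ x ∈ iter U A t, ip x w < c := by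
  intro t
  induction t with
  | zero => exact hA
  | succ t ih =>
    intro x hx
    rcases hx with hx | ⟨X, hXU, hall⟩
    · exact ih x hx
    · obtain ⟨y, hy, hy0⟩ := hF1w X hXU
      have := ih _ (hall y hy)
      rw [ip_add] at this
      linarith

lemma bclosure_halfplane {U : Finset (Finset Site)} {w : ℝ × ℝ} {c : ℝ}
    (hF1w : ∀ X ∈ U, ∃ y ∈ X, 0 ≤ ip y w) {A : Set Site}
    (hA : ∀ x ∈ A, ip x w < c) : ∀ x ∈ bclosure U A, ip x w < c := by
  intro x hx
  obtain ⟨t, ht⟩ := Set.mem_iUnion.1 hx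
  exact iter_halfplane hF1w hA t x ht

lemma bclosure_empty {U : Finset (Finset Site)}
    (hne : ∀ X ∈ U, X.Nonempty) : bclosure U (∅ : Set Site) = ∅ := by
  have hit : ∀ t, iter U (∅ : Set Site) t = ∅ := by
    intro t
    induction t with
    | zero => rfl
    | succ t ih =>
      show step U (iter U ∅ t) = ∅
      rw [ih]
      unfold step
      ext x
      simp only [Set.mem_union, Set.mem_setOf_eq, Set.mem_empty_iff_false, false_or, iff_false]
      rintro ⟨X, hXU, hall⟩
      obtain ⟨y, hy⟩ := hne X hXU
      exact hall y hy
  unfold bclosure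
  simp [hit]

structure Geo (U : Finset (Finset Site)) where
  u1 : ℝ × ℝ
  u2 : ℝ × ℝ
  u3 : ℝ × ℝ
  u4 : ℝ × ℝ
  l1 : ℝ
  l2 : ℝ
  l3 : ℝ
  l4 : ℝ
  C4 : ℝ
  nv : ℝ
  unit1 : unitVec u1
  unit2 : unitVec u2
  unit3 : unitVec u3
  unit4 : unitVec u4
  l1pos : 0 < l1
  l2pos : 0 < l2
  l3pos : 0 < l3
  l4pos : 0 < l4
  hsum : ∀ z : Site, l1 * ip z u1 + l2 * ip z u2 + l3 * ip z u3 + l4 * ip z u4 = 0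
  C4pos : 0 < C4
  hPS : ∀ x y : Site, ∀ m : ℝ, ip x u1 - ip y u1 ≤ m → ip x u2 - ip y u2 ≤ m →
      ip x u3 - ip y u3 ≤ m → ip x u4 - ip y u4 ≤ m → dist2 x y ≤ C4 * m
  nvnonneg : 0 ≤ nv
  hnv : ∀ X ∈ U, ∀ y ∈ insert (0 : Site) X, ∀ z ∈ insert (0 : Site) X, dist2 y z ≤ nv
  hF1 : ∀ X ∈ U, (∃ y ∈ X, 0 ≤ ip y u1) ∧ (∃ y ∈ X, 0 ≤ ip y u2) ∧
      (∃ y ∈ X, 0 ≤ ip y u3) ∧ (∃ y ∈ X, 0 ≤ ip y u4)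

variable {U : Finset (Finset Site)}

def hull (G : Geo U) (S : Set Site) : Set Site :=
  {x | ip x G.u1 ≤ Msup G.u1 S ∧ ip x G.u2 ≤ Msup G.u2 S ∧
    ip x G.u3 ≤ Msup G.u3 S ∧ ip x G.u4 ≤ Msup G.u4 S}

noncomputable def pot (G : Geo U) (S : Set Site) : ℝ :=
  G.l1 * Msup G.u1 S + G.l2 * Msup G.u2 S + G.l3 * Msup G.u3 S + G.l4 * Msup G.u4 S

noncomputable def lmin (G : Geo U) : ℝ := min (min G.l1 G.l2) (min G.l3 G.l4)

lemma lmin_pos (G : Geo U) : 0 < lmin G :=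
  lt_min (lt_min G.l1pos G.l2pos) (lt_min G.l3pos G.l4pos)

lemma subset_hull (G : Geo U) {S : Set Site} (hfin : S.Finite) : S ⊆ hull G S :=
  fun z hz => ⟨le_Msup hfin hz _, le_Msup hfin hz _, le_Msup hfin hz _, le_Msup hfin hz _⟩

lemma pot_eq (G : Geo U) {S : Set Site} {z₀ : Site} :
    pot G S = G.l1 * (Msup G.u1 S - ip z₀ G.u1) + G.l2 * (Msup G.u2 S - ip z₀ G.u2) +
      G.l3 * (Msup G.u3 S - ip z₀ G.u3) + G.l4 * (Msup G.u4 S - ip z₀ G.u4) := by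
  have := G.hsum z₀
  unfold pot
  ring_nf
  ring_nf at this
  linarith

lemma pot_nonneg (G : Geo U) {S : Set Site} (hfin : S.Finite) (hne : S.Nonempty) :
    0 ≤ pot G S := by
  obtain ⟨z₀, hz₀⟩ := hne
  rw [pot_eq G (z₀ := z₀)]
  have e1 := le_Msup hfin hz₀ G.u1
  have e2 := le_Msup hfin hz₀ G.u2
  have e3 := le_Msup hfin hz₀ G.u3
  have e4 := le_Msup hfin hz₀ G.u4
  have := G.l1pos
  have := G.l2pos
  have := G.l3pos
  have := G.l4pos
  nlinarith

lemma Msup_sub_le (G : Geo U) {S : Set Site} (hfin : S.Finite) {z₀ : Site} (hz₀ : z₀ ∈ S) :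
    (Msup G.u1 S - ip z₀ G.u1 ≤ pot G S / lmin G) ∧
    (Msup G.u2 S - ip z₀ G.u2 ≤ pot G S / lmin G) ∧
    (Msup G.u3 S - ip z₀ G.u3 ≤ pot G S / lmin G) ∧
    (Msup G.u4 S - ip z₀ G.u4 ≤ pot G S / lmin G) := by
  have e1 := le_Msup hfin hz₀ G.u1
  have e2 := le_Msup hfin hz₀ G.u2
  have e3 := le_Msup hfin hz₀ G.u3
  have e4 := le_Msup hfin hz₀ G.u4
  have hp := pot_eq G (S := S) (z₀ := z₀)
  have hl1 := G.l1pos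
  have hl2 := G.l2pos
  have hl3 := G.l3pos
  have hl4 := G.l4pos
  have hm : 0 < lmin G := lmin_pos G
  have hm1 : lmin G ≤ G.l1 := le_trans (min_le_left _ _) (min_le_left _ _)
  have hm2 : lmin G ≤ G.l2 := le_trans (min_le_left _ _) (min_le_right _ _)
  have hm3 : lmin G ≤ G.l3 := le_trans (min_le_right _ _) (min_le_left _ _)
  have hm4 : lmin G ≤ G.l4 := le_trans (min_le_right _ _) (min_le_right _ _)
  refine ⟨?_, ?_, ?_, ?_⟩ <;>
  · rw [le_div_iff₀ hm]
    nlinarith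

variable {U : Finset (Finset Site)}

lemma hull_proj (G : Geo U) {S : Set Site} (hfin : S.Finite) {z₀ : Site} (hz₀ : z₀ ∈ S)
    {x : Site} (hx : x ∈ hull G S) :
    (ip x G.u1 - ip z₀ G.u1 ≤ pot G S / lmin G) ∧
    (ip x G.u2 - ip z₀ G.u2 ≤ pot G S / lmin G) ∧
    (ip x G.u3 - ip z₀ G.u3 ≤ pot G S / lmin G) ∧
    (ip x G.u4 - ip z₀ G.u4 ≤ pot G S / lmin G) := by
  obtain ⟨m1, m2, m3, m4⟩ := Msup_sub_le G hfin hz₀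
  obtain ⟨h1, h2, h3, h4⟩ := hx
  exact ⟨by linarith, by linarith, by linarith, by linarith⟩

lemma hull_dist (G : Geo U) {S : Set Site} (hfin : S.Finite) {z₀ : Site} (hz₀ : z₀ ∈ S)
    {x : Site} (hx : x ∈ hull G S) :
    dist2 x z₀ ≤ G.C4 * (pot G S / lmin G) := by
  obtain ⟨h1, h2, h3, h4⟩ := hull_proj G hfin hz₀ hx
  exact G.hPS x z₀ _ h1 h2 h3 h4

lemma hull_pair_proj (G : Geo U) {S : Set Site} (hfin : S.Finite) {z₀ : Site} (hz₀ : z₀ ∈ S)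
    {x y : Site} (hx : x ∈ hull G S) (hy : y ∈ hull G S) :
    (ip x G.u1 - ip y G.u1 ≤ (1 + G.C4) * (pot G S / lmin G)) ∧
    (ip x G.u2 - ip y G.u2 ≤ (1 + G.C4) * (pot G S / lmin G)) ∧
    (ip x G.u3 - ip y G.u3 ≤ (1 + G.C4) * (pot G S / lmin G)) ∧
    (ip x G.u4 - ip y G.u4 ≤ (1 + G.C4) * (pot G S / lmin G)) := by
  obtain ⟨h1, h2, h3, h4⟩ := hull_proj G hfin hz₀ hx
  have hdy : dist2 y z₀ ≤ G.C4 * (pot G S / lmin G) := hull_dist G hfin hz₀ hy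
  have a1 := abs_ip_le z₀ y G.u1 G.unit1
  have a2 := abs_ip_le z₀ y G.u2 G.unit2
  have a3 := abs_ip_le z₀ y G.u3 G.unit3
  have a4 := abs_ip_le z₀ y G.u4 G.unit4
  rw [dist2_comm z₀ y] at a1 a2 a3 a4
  rw [abs_le] at a1 a2 a3 a4
  constructor
  · linarith [a1.1, a1.2]
  constructor
  · linarith [a2.1, a2.2]
  constructor
  · linarith [a3.1, a3.2]
  · linarith [a4.1, a4.2]

lemma hull_diam (G : Geo U) {S : Set Site} (hfin : S.Finite) (hne : S.Nonempty)
    {x y : Site} (hx : x ∈ hull G S) (hy : y ∈ hull G S) :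
    dist2 x y ≤ G.C4 * ((1 + G.C4) * (pot G S / lmin G)) := by
  obtain ⟨z₀, hz₀⟩ := hne
  obtain ⟨h1, h2, h3, h4⟩ := hull_pair_proj G hfin hz₀ hx hy
  exact G.hPS x y _ h1 h2 h3 h4

lemma pot_singleton (G : Geo U) (z : Site) : pot G {z} = 0 := by
  unfold pot
  rw [Msup_singleton, Msup_singleton, Msup_singleton, Msup_singleton]
  exact G.hsum z

lemma max_le_of_close {M1 M2 ax nv3 : ℝ} (h1 : ax ≤ M1) (h2 : ax - nv3 ≤ M2) (h3 : 0 ≤ nv3) :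
    max M1 M2 ≤ M1 + M2 - ax + nv3 := by
  rcases le_total M1 M2 with h | h
  · rw [max_eq_right h]; linarith
  · rw [max_eq_left h]; linarith

lemma pot_union_le (G : Geo U) {S T : Set Site} (hSf : S.Finite) (hSne : S.Nonempty)
    (hTf : T.Finite) (hTne : T.Nonempty) {x y : Site} (hx : x ∈ hull G S) (hy : y ∈ hull G T)
    (hd : dist2 x y ≤ 3 * G.nv) :
    pot G (S ∪ T) ≤ pot G S + pot G T + (G.l1 + G.l2 + G.l3 + G.l4) * (3 * G.nv) := by
  have h3nv : (0:ℝ) ≤ 3 * G.nv := by linarith [G.nvnonneg]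
  have key : ∀ w : ℝ × ℝ, unitVec w → ip x w ≤ Msup w S → ip y w ≤ Msup w T →
      Msup w (S ∪ T) ≤ Msup w S + Msup w T - ip x w + 3 * G.nv := by
    intro w hw hxw hyw
    rw [Msup_union hSf hSne hTf hTne]
    have ha := abs_ip_le x y w hw
    rw [abs_le] at ha
    exact max_le_of_close hxw (by linarith [ha.1, ha.2]) h3nv
  obtain ⟨hx1, hx2, hx3, hx4⟩ := hx
  obtain ⟨hy1, hy2, hy3, hy4⟩ := hy
  have k1 := key G.u1 G.unit1 hx1 hy1
  have k2 := key G.u2 G.unit2 hx2 hy2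
  have k3 := key G.u3 G.unit3 hx3 hy3
  have k4 := key G.u4 G.unit4 hx4 hy4
  have hs := G.hsum x
  have hl1 := G.l1pos
  have hl2 := G.l2pos
  have hl3 := G.l3pos
  have hl4 := G.l4pos
  unfold pot
  nlinarith [mul_le_mul_of_nonneg_left k1 hl1.le, mul_le_mul_of_nonneg_left k2 hl2.le,
    mul_le_mul_of_nonneg_left k3 hl3.le, mul_le_mul_of_nonneg_left k4 hl4.le]

lemma hull_step_closed (G : Geo U) {S : Set Site} {x : Site} {X : Finset Site} (hXU : X ∈ U)
    (hall : ∀ y ∈ X, x + y ∈ hull G S) : x ∈ hull G S := by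
  obtain ⟨⟨y1, hy1, hy1'⟩, ⟨y2, hy2, hy2'⟩, ⟨y3, hy3, hy3'⟩, ⟨y4, hy4, hy4'⟩⟩ := G.hF1 X hXU
  have h1 := (hall y1 hy1).1
  have h2 := (hall y2 hy2).2.1
  have h3 := (hall y3 hy3).2.2.1
  have h4 := (hall y4 hy4).2.2.2
  rw [ip_add] at h1 h2 h3 h4
  exact ⟨by linarith, by linarith, by linarith, by linarith⟩

lemma closure_subset_hulls (G : Geo U) (parts : Finset (Finset Site))
    (hsep : (↑parts : Set (Finset Site)).Pairwise
      (fun P Q => ∀ x ∈ hull G (↑P : Set Site), ∀ y ∈ hull G (↑Q : Set Site),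
        3 * G.nv < dist2 x y))
    (Z : Set Site) (hZ : Z ⊆ ⋃ P ∈ parts, hull G (↑P : Set Site)) :
    bclosure U Z ⊆ ⋃ P ∈ parts, hull G (↑P : Set Site) := by
  have hit : ∀ t, iter U Z t ⊆ ⋃ P ∈ parts, hull G (↑P : Set Site) := by
    intro t
    induction t with
    | zero => exact hZ
    | succ t ih =>
      intro x hx
      rcases hx with hx | ⟨X, hXU, hall⟩
      · exact ih hx
      · obtain ⟨⟨y0, hy0, _⟩, _, _, _⟩ := G.hF1 X hXU
        obtain ⟨P₀, hP₀, hxy0⟩ := Set.mem_iUnion₂.1 (ih (hall y0 hy0))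
        have hallP : ∀ y ∈ X, x + y ∈ hull G (↑P₀ : Set Site) := by
          intro y hy
          obtain ⟨P, hP, hxy⟩ := Set.mem_iUnion₂.1 (ih (hall y hy))
          by_cases hPP : P = P₀
          · exact hPP ▸ hxy
          · exfalso
            have hgap := hsep (Finset.mem_coe.2 hP) (Finset.mem_coe.2 hP₀) hPP
              _ hxy _ hxy0
            have hle : dist2 (x + y) (x + y0) ≤ G.nv := by
              rw [dist2_add_left]
              exact G.hnv X hXU y (Finset.mem_insert_of_mem hy) y0 (Finset.mem_insert_of_mem hy0)
            linarith [G.nvnonneg]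
        exact Set.mem_iUnion₂.2 ⟨P₀, hP₀, hull_step_closed G hXU hallP⟩
  intro x hx
  obtain ⟨t, ht⟩ := Set.mem_iUnion.1 hx
  exact hit t ht

variable {U : Finset (Finset Site)}

noncomputable def c5 (G : Geo U) : ℝ := (G.l1 + G.l2 + G.l3 + G.l4) * (3 * G.nv) + 1

lemma c5_pos (G : Geo U) : 0 < c5 G := by
  unfold c5
  have h1 := G.l1pos
  have h2 := G.l2pos
  have h3 := G.l3pos
  have h4 := G.l4pos
  have h5 := G.nvnonneg
  nlinarith

lemma merge_exists (G : Geo U) : ∀ (j : ℕ) (parts : Finset (Finset Site)) (n : ℝ),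
    parts.card ≤ j → (∀ P ∈ parts, P.Nonempty) →
    (∑ P ∈ parts, pot G (↑P : Set Site)) ≤ c5 G * (n - parts.card) →
    ∃ parts' : Finset (Finset Site),
      (∀ P ∈ parts', P.Nonempty) ∧
      ((⋃ P ∈ parts, (↑P : Set Site)) ⊆ ⋃ P ∈ parts', (↑P : Set Site)) ∧
      (parts.Nonempty → parts'.Nonempty) ∧
      (∑ P ∈ parts', pot G (↑P : Set Site)) ≤ c5 G * (n - parts'.card) ∧
      (↑parts' : Set (Finset Site)).Pairwise
        (fun P Q => ∀ x ∈ hull G (↑P : Set Site), ∀ y ∈ hull G (↑Q : Set Site),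
          3 * G.nv < dist2 x y) := by
  intro j
  induction j with
  | zero =>
    intro parts n hcard hne hsum
    have hempty : parts = ∅ := Finset.card_eq_zero.1 (Nat.le_zero.1 hcard)
    subst hempty
    refine ⟨∅, by simp, by simp, fun h => absurd h (by simp), by simpa using hsum, by simp⟩
  | succ j ih =>
    intro parts n hcard hne hsum
    by_cases hp : (↑parts : Set (Finset Site)).Pairwise
        (fun P Q => ∀ x ∈ hull G (↑P : Set Site), ∀ y ∈ hull G (↑Q : Set Site),
          3 * G.nv < dist2 x y)
    · exact ⟨parts, hne, subset_rfl, fun h => h, hsum, hp⟩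
    · rw [Set.Pairwise] at hp
      push_neg at hp
      obtain ⟨P, hP, Q, hQ, hPQ, x, hx, y, hy, hxy⟩ := hp
      rw [Finset.mem_coe] at hP hQ
      have hQe : Q ∈ parts.erase P := Finset.mem_erase.2 ⟨Ne.symm hPQ, hQ⟩
      set e2 : Finset (Finset Site) := (parts.erase P).erase Q with he2
      set parts₁ : Finset (Finset Site) := insert (P ∪ Q) e2 with hparts₁
      have hPne := hne P hP
      have hQne := hne Q hQ
      have hPQne : (P ∪ Q).Nonempty := by
        obtain ⟨p, hp'⟩ := hPne
        exact ⟨p, Finset.mem_union_left _ hp'⟩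
      -- cardinality facts
      have hc1 : (parts.erase P).card = parts.card - 1 := Finset.card_erase_of_mem hP
      have hc2 : e2.card = (parts.erase P).card - 1 := Finset.card_erase_of_mem hQe
      have hc3 : 1 ≤ (parts.erase P).card := Finset.card_pos.2 ⟨Q, hQe⟩
      have hc4 : 1 ≤ parts.card := Finset.card_pos.2 ⟨P, hP⟩
      have hc5' : 2 ≤ parts.card := by omega
      have hci : parts₁.card ≤ e2.card + 1 := Finset.card_insert_le _ _
      have hcard1 : parts₁.card ≤ j := by omega
      have hcard1' : parts₁.card + 1 ≤ parts.card := by omega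
      -- potential facts
      have hpotPQ : pot G (↑(P ∪ Q) : Set Site) ≤ pot G (↑P : Set Site) + pot G (↑Q : Set Site)
          + c5 G := by
        have h := pot_union_le G P.finite_toSet (by exact_mod_cast hPne) Q.finite_toSet
          (by exact_mod_cast hQne) hx hy hxy
        rw [← Finset.coe_union] at h
        unfold c5
        linarith
      have hsplit : ∑ R ∈ parts, pot G (↑R : Set Site)
          = pot G (↑P : Set Site) + (pot G (↑Q : Set Site) + ∑ R ∈ e2, pot G (↑R : Set Site)) := by
        have h1 := (Finset.add_sum_erase parts (fun R => pot G (↑R : Set Site)) hP).symm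
        have h2 := (Finset.add_sum_erase (parts.erase P) (fun R => pot G (↑R : Set Site)) hQe).symm
        rw [he2]
        rw [h1, h2]
      have hsum1 : ∑ R ∈ parts₁, pot G (↑R : Set Site)
          ≤ pot G (↑(P ∪ Q) : Set Site) + ∑ R ∈ e2, pot G (↑R : Set Site) := by
        by_cases hmem : (P ∪ Q) ∈ e2
        · rw [hparts₁, Finset.insert_eq_self.2 hmem]
          have h0 : 0 ≤ pot G (↑(P ∪ Q) : Set Site) :=
            pot_nonneg G (P ∪ Q).finite_toSet (by exact_mod_cast hPQne)
          linarith
        · rw [hparts₁, Finset.sum_insert hmem]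
      have hc5pos := c5_pos G
      have hcastle : (parts₁.card : ℝ) ≤ (parts.card : ℝ) - 1 := by
        have : (parts₁.card : ℝ) + 1 ≤ (parts.card : ℝ) := by exact_mod_cast hcard1'
        linarith
      have hsum2 : (∑ R ∈ parts₁, pot G (↑R : Set Site)) ≤ c5 G * (n - parts₁.card) := by
        have step1 : (∑ R ∈ parts₁, pot G (↑R : Set Site))
            ≤ (∑ R ∈ parts, pot G (↑R : Set Site)) + c5 G := by
          rw [hsplit]
          linarith
        have step2 : c5 G * (n - parts.card) + c5 G ≤ c5 G * (n - parts₁.card) := by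
          have hd : (0:ℝ) ≤ (parts.card : ℝ) - 1 - parts₁.card := by linarith
          nlinarith [mul_nonneg hc5pos.le hd]
        linarith
      have hne1 : ∀ R ∈ parts₁, R.Nonempty := by
        intro R hR
        rcases Finset.mem_insert.1 hR with rfl | hR
        · exact hPQne
        · exact hne R (Finset.mem_of_mem_erase (Finset.mem_of_mem_erase hR))
      obtain ⟨parts', hne', hsub', hne'', hsum', hsep'⟩ := ih parts₁ n hcard1 hne1 hsum2
      refine ⟨parts', hne', ?_, fun _ => hne'' ⟨P ∪ Q, Finset.mem_insert_self _ _⟩, hsum', hsep'⟩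
      refine subset_trans ?_ hsub'
      intro z hz
      obtain ⟨R, hR, hzR⟩ := Set.mem_iUnion₂.1 hz
      rw [Finset.mem_coe] at hzR
      apply Set.mem_iUnion₂.2
      by_cases hRP : R = P
      · exact ⟨P ∪ Q, Finset.mem_insert_self _ _, Finset.mem_coe.2
          (Finset.mem_union_left _ (hRP ▸ hzR))⟩
      by_cases hRQ : R = Q
      · exact ⟨P ∪ Q, Finset.mem_insert_self _ _, Finset.mem_coe.2
          (Finset.mem_union_right _ (hRQ ▸ hzR))⟩
      · exact ⟨R, Finset.mem_insert_of_mem (Finset.mem_erase.2 ⟨hRQ,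
          Finset.mem_erase.2 ⟨hRP, hR⟩⟩), Finset.mem_coe.2 hzR⟩
  termination_by j => j

lemma ip_neg_dir (z : Site) (u : ℝ × ℝ) : ip z (-u) = -ip z u := by
  simp only [ip, Prod.fst_neg, Prod.snd_neg]
  ring

lemma unitVec_neg {u : ℝ × ℝ} (hu : unitVec u) : unitVec (-u) := by
  unfold unitVec at *
  simp only [Prod.fst_neg, Prod.snd_neg]
  nlinarith

lemma build_PS (u ul ur : ℝ × ℝ) (hu : unitVec u)
    (hs' : 0 < ipR ul (-u.2, u.1)) (hs : 0 < ipR ur (u.2, -u.1)) :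
    ∃ C4 : ℝ, 0 < C4 ∧ ∀ x y : Site, ∀ m : ℝ,
      ip x u - ip y u ≤ m → ip x (-u) - ip y (-u) ≤ m →
      ip x ul - ip y ul ≤ m → ip x ur - ip y ur ≤ m → dist2 x y ≤ C4 * m := by
  set s : ℝ := ipR ur (u.2, -u.1) with hsdef
  set s' : ℝ := ipR ul (-u.2, u.1) with hs'def
  set t : ℝ := ipR ur u with htdef
  set t' : ℝ := ipR ul u with ht'def
  refine ⟨1 + (1 + |t|) / s + (1 + |t'|) / s', by positivity, ?_⟩
  intro x y m h1 h2 h3 h4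
  set a : ℝ := ((x.1 - y.1 : ℤ) : ℝ) with hadef
  set b : ℝ := ((x.2 - y.2 : ℤ) : ℝ) with hbdef
  set A : ℝ := a * u.1 + b * u.2 with hAdef
  set B : ℝ := a * u.2 - b * u.1 with hBdef
  have hipu : ip x u - ip y u = A := by
    simp only [ip, hAdef, hadef, hbdef]
    push_cast
    ring
  have hipnu : ip x (-u) - ip y (-u) = -A := by
    rw [ip_neg_dir, ip_neg_dir]
    linarith [hipu]
  have hA : A ≤ m := hipu ▸ h1
  have hA' : -A ≤ m := hipnu ▸ h2
  have hm : 0 ≤ m := by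
    rcases le_total 0 A with h | h
    · linarith
    · linarith
  have habs : |A| ≤ m := abs_le.2 ⟨by linarith, hA⟩
  have hipur : ip x ur - ip y ur = A * t + B * s := by
    simp only [ip, ipR, hAdef, hBdef, hadef, hbdef, htdef, hsdef]
    push_cast
    unfold unitVec at hu
    linear_combination (-(((x.1:ℝ) - y.1) * ur.1 + ((x.2:ℝ) - y.2) * ur.2)) * hu
  have hipul : ip x ul - ip y ul = A * t' - B * s' := by
    simp only [ip, ipR, hAdef, hBdef, hadef, hbdef, ht'def, hs'def]
    push_cast
    unfold unitVec at hu
    linear_combination (-(((x.1:ℝ) - y.1) * ul.1 + ((x.2:ℝ) - y.2) * ul.2)) * hu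
  have hBub : B ≤ (1 + |t|) / s * m := by
    rw [div_mul_eq_mul_div, le_div_iff₀ hs]
    have h4' : A * t + B * s ≤ m := hipur ▸ h4
    have : |A * t| ≤ m * |t| := by
      rw [abs_mul]
      exact mul_le_mul_of_nonneg_right habs (abs_nonneg t)
    have := abs_le.1 this
    nlinarith [abs_nonneg t]
  have hBlb : -B ≤ (1 + |t'|) / s' * m := by
    rw [div_mul_eq_mul_div, le_div_iff₀ hs']
    have h3' : A * t' - B * s' ≤ m := hipul ▸ h3
    have : |A * t'| ≤ m * |t'| := by
      rw [abs_mul]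
      exact mul_le_mul_of_nonneg_right habs (abs_nonneg t')
    have := abs_le.1 this
    nlinarith [abs_nonneg t']
  have hsq : A ^ 2 + B ^ 2 = a ^ 2 + b ^ 2 := by
    simp only [hAdef, hBdef]
    unfold unitVec at hu
    linear_combination (a ^ 2 + b ^ 2) * hu
  have hd : dist2 x y = Real.sqrt (A ^ 2 + B ^ 2) := by
    unfold dist2
    rw [hsq]
  rw [hd]
  have hstep := sqrt_le_abs_add_abs A B
  have hBabs : |B| ≤ (1 + |t|) / s * m + (1 + |t'|) / s' * m := by
    have k1 : 0 ≤ (1 + |t|) / s * m := by positivity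
    have k2 : 0 ≤ (1 + |t'|) / s' * m := by positivity
    rw [abs_le]
    constructor <;> linarith
  calc Real.sqrt (A ^ 2 + B ^ 2) ≤ |A| + |B| := hstep
    _ ≤ m + ((1 + |t|) / s * m + (1 + |t'|) / s' * m) := by linarith
    _ = (1 + (1 + |t|) / s + (1 + |t'|) / s') * m := by ring

lemma build_lambda (u ul ur : ℝ × ℝ) (hu : unitVec u)
    (hs' : 0 < ipR ul (-u.2, u.1)) (hs : 0 < ipR ur (u.2, -u.1)) :
    ∃ l1 l2 l3 l4 : ℝ, 0 < l1 ∧ 0 < l2 ∧ 0 < l3 ∧ 0 < l4 ∧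
      ∀ z : Site, l1 * ip z u + l2 * ip z (-u) + l3 * ip z ul + l4 * ip z ur = 0 := by
  set s : ℝ := ipR ur (u.2, -u.1) with hsdef
  set s' : ℝ := ipR ul (-u.2, u.1) with hs'def
  set t : ℝ := ipR ur u with htdef
  set t' : ℝ := ipR ul u with ht'def
  set e : ℝ := s * t' + s' * t with hedef
  refine ⟨1 + |e|, 1 + |e| + e, s, s', by positivity, ?_, hs, hs', ?_⟩
  · have := neg_abs_le e
    linarith
  intro z
  have hkey : s * ip z ul + s' * ip z ur = e * ip z u := by
    simp only [ip, ipR, hsdef, hs'def, htdef, ht'def, hedef]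
    unfold unitVec at hu
    linear_combination (-((z.1 : ℝ) * ((ur.1 * u.2 - ur.2 * u.1) * ul.1
        + (ul.2 * u.1 - ul.1 * u.2) * ur.1)
      + (z.2 : ℝ) * ((ur.1 * u.2 - ur.2 * u.1) * ul.2
        + (ul.2 * u.1 - ul.1 * u.2) * ur.2))) * hu
  rw [ip_neg_dir]
  linarith [hkey]

lemma nu_facts (U : Finset (Finset Site)) :
    0 ≤ nu U ∧ ∀ X ∈ U, ∀ y ∈ insert (0 : Site) X, ∀ z ∈ insert (0 : Site) X,
      dist2 y z ≤ nu U := by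
  set Sν := {d : ℝ | ∃ X ∈ U, ∃ x ∈ insert (0 : Site) X, ∃ y ∈ insert (0 : Site) X,
    d = dist2 x y} with hSdef
  have hfin : Sν.Finite := by
    set B : Finset Site := U.sup (fun X => insert (0 : Site) X) with hBdef
    apply Set.Finite.subset (Set.Finite.image (fun p : Site × Site => dist2 p.1 p.2)
      ((B ×ˢ B).finite_toSet))
    rintro d ⟨X, hX, x, hx, y, hy, rfl⟩
    refine ⟨(x, y), ?_, rfl⟩
    simp only [Finset.coe_product, Set.mem_prod, Finset.mem_coe]
    constructor
    · exact Finset.mem_sup.2 ⟨X, hX, hx⟩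
    · exact Finset.mem_sup.2 ⟨X, hX, hy⟩
  constructor
  · apply Real.sSup_nonneg
    rintro d ⟨X, hX, x, hx, y, hy, rfl⟩
    exact dist2_nonneg x y
  · intro X hX y hy z hz
    exact le_csSup hfin.bddAbove ⟨X, hX, y, hy, z, hz, rfl⟩

lemma rep_exists (w : ℝ × ℝ) (hw : unitVec w) (M : ℝ) :
    ∃ aw : Site, M < ip aw w ∧ ip aw w ≤ M + 1 := by
  have key : ∀ (g : Site) (tv : ℝ), ip g w = tv → 0 < tv → tv ≤ 1 →
      ∃ aw : Site, M < ip aw w ∧ ip aw w ≤ M + 1 := by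
    intro g tv hg ht0 ht1
    set k : ℤ := ⌊M / tv⌋ + 1 with hkdef
    refine ⟨(k * g.1, k * g.2), ?_, ?_⟩
    · have hip : ip (k * g.1, k * g.2) w = k * tv := by
        rw [← hg]
        simp only [ip]
        push_cast
        ring
      rw [hip]
      have h1 : M / tv < (k : ℝ) := by
        rw [hkdef]
        push_cast
        exact Int.lt_floor_add_one _
      calc M = (M / tv) * tv := by field_simp
        _ < (k : ℝ) * tv := by
          exact mul_lt_mul_of_pos_right h1 ht0
    · have hip : ip (k * g.1, k * g.2) w = k * tv := by
        rw [← hg]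
        simp only [ip]
        push_cast
        ring
      rw [hip]
      have h1 : ((k : ℝ) - 1) ≤ M / tv := by
        rw [hkdef]
        push_cast
        linarith [Int.floor_le (M / tv)]
      have h2 : ((k : ℝ) - 1) * tv ≤ M := by
        calc ((k : ℝ) - 1) * tv ≤ (M / tv) * tv := mul_le_mul_of_nonneg_right h1 ht0.le
          _ = M := by field_simp
      nlinarith
  have hw1 : w.1 ^ 2 ≤ 1 := by
    unfold unitVec at hw
    nlinarith [sq_nonneg w.2]
  have hw2 : w.2 ^ 2 ≤ 1 := by
    unfold unitVec at hw
    nlinarith [sq_nonneg w.1]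
  have habs1 : |w.1| ≤ 1 := by
    rw [← Real.sqrt_one, ← Real.sqrt_sq_eq_abs]
    exact Real.sqrt_le_sqrt hw1
  have habs2 : |w.2| ≤ 1 := by
    rw [← Real.sqrt_one, ← Real.sqrt_sq_eq_abs]
    exact Real.sqrt_le_sqrt hw2
  rcases lt_trichotomy w.1 0 with h1 | h1 | h1
  · exact key (-1, 0) (-w.1) (by simp [ip]) (by linarith) (by rw [abs_le] at habs1; linarith)
  · rcases lt_trichotomy w.2 0 with h2 | h2 | h2
    · exact key (0, -1) (-w.2) (by simp [ip]) (by linarith) (by rw [abs_le] at habs2; linarith)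
    · exfalso
      unfold unitVec at hw
      rw [h1, h2] at hw
      norm_num at hw
    · exact key (0, 1) w.2 (by simp [ip]) h2 (by rw [abs_le] at habs2; linarith)
  · exact key (1, 0) w.1 (by simp [ip]) h1 (by rw [abs_le] at habs1; linarith)

end AuxExtremal

/-- **Extremal lemma for internally spanned droplets (Lemma 5.10).**  For an unbalanced
critical family there is a constant `c > 0` such that every internally spanned
`S_U`-droplet `D` satisfies `|D ∩ A| ≥ c · diam D`. -/
theorem extremal_internallySpanned
    (U : Finset (Finset Site)) (hU : ∀ X ∈ U, (0 : Site) ∉ X)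
    (hcrit : Critical U) (hunbal : ¬ BalancedCond U)
    (a : ℕ) (ha : famDifficulty U = (a : ℕ∞))
    (ustar ul ur : ℝ × ℝ) (hSU : ValidSU U a ustar ul ur) :
    ∃ c : ℝ, 0 < c ∧ ∀ A D : Set Site,
      InternallySpanned U {ustar, -ustar, ul, ur} (3 * nu U) A D →
      c * diam2 D ≤ ((D ∩ A).ncard : ℝ) := by
  classical
  obtain ⟨hst1, hst2, hst3, hst4, -, -, hsl, hsr, -⟩ := hSU
  have hu1 : unitVec ustar := hst1.1
  have hu2 : unitVec (-ustar) := unitVec_neg hu1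
  have hu3 : unitVec ul := hst3.1
  have hu4 : unitVec ur := hst4.1
  have hF1a := stable_F1 hst1.2
  have hF1b := stable_F1 hst2.2
  have hF1c := stable_F1 hst3.2
  have hF1d := stable_F1 hst4.2
  obtain ⟨C4, hC4pos, hPS⟩ := build_PS ustar ul ur hu1 hsl hsr
  obtain ⟨l1, l2, l3, l4, hl1, hl2, hl3, hl4, hsum⟩ := build_lambda ustar ul ur hu1 hsl hsr
  obtain ⟨hnv0, hnvb⟩ := nu_facts U
  let G : Geo U := ⟨ustar, -ustar, ul, ur, l1, l2, l3, l4, C4, nu U,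
    hu1, hu2, hu3, hu4, hl1, hl2, hl3, hl4, hsum, hC4pos, hPS, hnv0, hnvb,
    fun X hX => ⟨hF1a X hX, hF1b X hX, hF1c X hX, hF1d X hX⟩⟩
  have hGu1 : G.u1 = ustar := rfl
  have hGu2 : G.u2 = -ustar := rfl
  have hGu3 : G.u3 = ul := rfl
  have hGu4 : G.u4 = ur := rfl
  have hGnv : G.nv = nu U := rfl
  have hGC4 : G.C4 = C4 := rfl
  have hc5pos := c5_pos G
  have hlminpos := lmin_pos G
  have hqpos : 0 < c5 G / lmin G := div_pos hc5pos hlminpos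
  have hf1 : (0:ℝ) < 1 + C4 := by linarith
  obtain ⟨C8, hC8def⟩ : ∃ x : ℝ, x = C4 * (1 + C4) * ((1 + C4) * (c5 G / lmin G) + 2) :=
    ⟨_, rfl⟩
  have hf2 : (0:ℝ) < (1 + C4) * (c5 G / lmin G) + 2 := by nlinarith [mul_pos hf1 hqpos]
  have hC8pos : 0 < C8 := by
    rw [hC8def]
    exact mul_pos (mul_pos hC4pos hf1) hf2
  refine ⟨C8⁻¹, inv_pos.2 hC8pos, ?_⟩
  intro A D hIS
  set T : Set (ℝ × ℝ) := {ustar, -ustar, ul, ur} with hTdef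
  obtain ⟨L, hLsub, hLconn, hLdrop, hLD, hmin⟩ := hIS
  obtain ⟨hDne, aD, hDeq⟩ := hLdrop
  have hDmem : ∀ x : Site, x ∈ D ↔ ∀ u ∈ T, ip (x - aD u) u < 0 := by
    intro x
    rw [hDeq]
    exact Set.mem_iInter₂
  have huT : ustar ∈ T := by simp [hTdef]
  have hnuT : -ustar ∈ T := by simp [hTdef]
  have hulT : ul ∈ T := by simp [hTdef]
  have hurT : ur ∈ T := by simp [hTdef]
  obtain ⟨x₁, hx₁⟩ := hDne
  -- a bound on D in terms of the droplet data, giving finiteness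
  set m₀ : ℝ := max (max (ip (aD ustar) ustar - ip x₁ ustar)
      (ip (aD (-ustar)) (-ustar) - ip x₁ (-ustar)))
    (max (ip (aD ul) ul - ip x₁ ul) (ip (aD ur) ur - ip x₁ ur)) with hm₀def
  have hDbound : ∀ x ∈ D, dist2 x x₁ ≤ C4 * m₀ := by
    intro x hx
    have hx' := (hDmem x).1 hx
    have b1 := hx' ustar huT
    have b2 := hx' (-ustar) hnuT
    have b3 := hx' ul hulT
    have b4 := hx' ur hurT
    rw [ip_sub] at b1 b2 b3 b4
    have hm1 : ip (aD ustar) ustar - ip x₁ ustar ≤ m₀ :=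
      le_trans (le_max_left _ _) (le_max_left _ _)
    have hm2 : ip (aD (-ustar)) (-ustar) - ip x₁ (-ustar) ≤ m₀ :=
      le_trans (le_max_right _ _) (le_max_left _ _)
    have hm3 : ip (aD ul) ul - ip x₁ ul ≤ m₀ :=
      le_trans (le_max_left _ _) (le_max_right _ _)
    have hm4 : ip (aD ur) ur - ip x₁ ur ≤ m₀ :=
      le_trans (le_max_right _ _) (le_max_right _ _)
    exact hPS x x₁ m₀ (by linarith) (by linarith) (by linarith) (by linarith)
  have hDfin : D.Finite := finite_of_ball D x₁ (C4 * m₀) hDbound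
  have hR0 : 0 ≤ C4 * m₀ := le_trans (dist2_nonneg x₁ x₁) (hDbound x₁ hx₁)
  -- L is nonempty
  have hLne : L.Nonempty := by
    rcases L.eq_empty_or_nonempty with hLe | hLne
    · exfalso
      set k : ℤ := ⌈2 * (C4 * m₀)⌉ + 1 with hkdef
      have hk1 : (1:ℤ) ≤ k := by
        have : (0:ℤ) ≤ ⌈2 * (C4 * m₀)⌉ := by
          rw [Int.le_ceil_iff]
          push_cast
          linarith
        omega
      have hkR : 2 * (C4 * m₀) + 1 ≤ (k : ℝ) := by
        rw [hkdef]
        push_cast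
        linarith [Int.le_ceil (2 * (C4 * m₀))]
      set z : Site := (k, 0) with hzdef
      set D' : Set Site := ⋂ u ∈ T, {p : Site | ip (p - (aD u + z)) u < 0} with hD'def
      have hD'mem : ∀ p : Site, p ∈ D' ↔ ∀ u ∈ T, ip (p - (aD u + z)) u < 0 := by
        intro p
        rw [hD'def]
        exact Set.mem_iInter₂
      have hDD' : D ⊆ D' := by
        apply hmin D' ⟨⟨x₁ + z, ?_⟩, fun u => aD u + z, rfl⟩ (hLe ▸ Set.empty_subset _)
        apply (hD'mem _).2
        intro u huT'
        have : x₁ + z - (aD u + z) = x₁ - aD u := by ring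
        rw [this]
        exact (hDmem x₁).1 hx₁ u huT'
      have hx₁z : x₁ - z ∈ D := by
        apply (hDmem _).2
        intro u huT'
        have := (hD'mem x₁).1 (hDD' hx₁) u huT'
        have heq : x₁ - (aD u + z) = x₁ - z - aD u := by ring
        rwa [heq] at this
      have hdist : dist2 (x₁ - z) x₁ = (k : ℝ) := by
        unfold dist2
        have e1 : ((x₁ - z).1 - x₁.1 : ℤ) = -k := by
          simp [hzdef, Prod.fst_sub]
        have e2 : ((x₁ - z).2 - x₁.2 : ℤ) = 0 := by
          simp [hzdef, Prod.snd_sub]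
        rw [e1, e2]
        push_cast
        rw [show (-(k:ℝ)) ^ 2 + 0 ^ 2 = (k:ℝ) ^ 2 by ring]
        have hk0 : (0:ℝ) ≤ (k:ℝ) := by exact_mod_cast (by omega : (0:ℤ) ≤ k)
        rw [Real.sqrt_sq hk0]
      have := hDbound (x₁ - z) hx₁z
      rw [hdist] at this
      linarith
    · exact hLne
  -- D ∩ A is nonempty and finite
  have hZfin : (D ∩ A).Finite := hDfin.subset Set.inter_subset_left
  have hZne : (D ∩ A).Nonempty := by
    by_contra h
    rw [Set.not_nonempty_iff_eq_empty] at h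
    rw [h, bclosure_empty (fun X hX => ⟨(hF1a X hX).choose, (hF1a X hX).choose_spec.1⟩)]
      at hLsub
    obtain ⟨p, hp⟩ := hLne
    exact hLsub hp
  set Z' : Finset Site := hZfin.toFinset with hZ'def
  have hZ'ne : Z'.Nonempty := by
    obtain ⟨z, hz⟩ := hZne
    exact ⟨z, hZfin.mem_toFinset.2 hz⟩
  set n : ℕ := Z'.card with hndef
  have hn1 : 1 ≤ n := Finset.card_pos.2 hZ'ne
  have hncard : (D ∩ A).ncard = n := by
    rw [Set.ncard_eq_toFinset_card _ hZfin]
  -- initial partition into singletons, then merge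
  set parts₀ : Finset (Finset Site) := Z'.image (fun z => ({z} : Finset Site)) with hparts₀def
  have hne0 : ∀ P ∈ parts₀, P.Nonempty := by
    intro P hP
    obtain ⟨z, -, rfl⟩ := Finset.mem_image.1 hP
    exact ⟨z, Finset.mem_singleton_self z⟩
  have hsum0 : (∑ P ∈ parts₀, pot G (↑P : Set Site)) ≤ c5 G * ((n : ℝ) - parts₀.card) := by
    have h0 : (∑ P ∈ parts₀, pot G (↑P : Set Site)) = 0 := by
      apply Finset.sum_eq_zero
      intro P hP
      obtain ⟨z, -, rfl⟩ := Finset.mem_image.1 hP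
      rw [Finset.coe_singleton]
      exact pot_singleton G z
    rw [h0]
    have hcle : (parts₀.card : ℝ) ≤ (n : ℝ) := by
      exact_mod_cast Finset.card_image_le
    nlinarith [hc5pos]
  obtain ⟨parts, hneP, hsubP, hnem, hsumP, hsepP⟩ :=
    merge_exists G parts₀.card parts₀ (n : ℝ) le_rfl hne0 hsum0
  -- the closure of D ∩ A lies in the union of the hulls
  have hZhull : (D ∩ A) ⊆ ⋃ P ∈ parts, hull G (↑P : Set Site) := by
    intro z hz
    have h1 : z ∈ ⋃ P ∈ parts₀, (↑P : Set Site) := by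
      apply Set.mem_iUnion₂.2
      refine ⟨{z}, Finset.mem_image_of_mem _ (hZfin.mem_toFinset.2 hz), ?_⟩
      simp
    obtain ⟨P, hP, hzP⟩ := Set.mem_iUnion₂.1 (hsubP h1)
    exact Set.mem_iUnion₂.2 ⟨P, hP, subset_hull G P.finite_toSet hzP⟩
  have hLhull : L ⊆ ⋃ P ∈ parts, hull G (↑P : Set Site) :=
    subset_trans hLsub (closure_subset_hulls G parts hsepP _ hZhull)
  -- L lies in a single hull
  obtain ⟨x₀, hx₀L⟩ := id hLne
  obtain ⟨P₀, hP₀, hx₀⟩ := Set.mem_iUnion₂.1 (hLhull hx₀L)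
  have hP₀coe : (↑P₀ : Set Site).Nonempty := by
    obtain ⟨p, hp⟩ := hneP P₀ hP₀
    exact ⟨p, hp⟩
  have hLP₀ : ∀ y ∈ L, y ∈ hull G (↑P₀ : Set Site) := by
    intro y hyL
    have hpath := hLconn x₀ hx₀L y hyL
    clear hyL
    induction hpath with
    | refl => exact hx₀
    | @tail b c hab hbc ih =>
      obtain ⟨P, hP, hcP⟩ := Set.mem_iUnion₂.1 (hLhull hbc.1)
      by_cases hPP : P = P₀
      · exact hPP ▸ hcP
      · exfalso
        have hgap := hsepP (Finset.mem_coe.2 hP) (Finset.mem_coe.2 hP₀) hPP _ hcP _ ih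
        rw [dist2_comm] at hgap
        have hd := hbc.2
        rw [← hGnv] at hd
        linarith
  -- bound the potential of P₀
  have hallpotnn : ∀ P ∈ parts, 0 ≤ pot G (↑P : Set Site) := by
    intro P hP
    obtain ⟨p, hp⟩ := hneP P hP
    exact pot_nonneg G P.finite_toSet ⟨p, hp⟩
  have hpartsne : parts.Nonempty := hnem (hZ'ne.image _)
  have hpotP₀ : pot G (↑P₀ : Set Site) ≤ c5 G * ((n : ℝ) - 1) := by
    have h1 : pot G (↑P₀ : Set Site) ≤ ∑ P ∈ parts, pot G (↑P : Set Site) :=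
      Finset.single_le_sum hallpotnn hP₀
    have h2 : (1 : ℝ) ≤ (parts.card : ℝ) := by
      exact_mod_cast Finset.card_pos.2 hpartsne
    have h3 : c5 G * ((n:ℝ) - parts.card) ≤ c5 G * ((n:ℝ) - 1) :=
      mul_le_mul_of_nonneg_left (by linarith) hc5pos.le
    linarith
  obtain ⟨z₀, hz₀⟩ := hneP P₀ hP₀
  have hz₀' : z₀ ∈ (↑P₀ : Set Site) := hz₀
  obtain ⟨q, hqdef⟩ : ∃ x : ℝ, x = pot G (↑P₀ : Set Site) / lmin G := ⟨_, rfl⟩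
  have hq0 : 0 ≤ q := by
    rw [hqdef]
    exact div_nonneg (pot_nonneg G P₀.finite_toSet hP₀coe) hlminpos.le
  -- L is finite
  have hLfin : L.Finite := by
    apply finite_of_ball L z₀ (C4 * q)
    intro y hy
    have h := hull_dist G P₀.finite_toSet hz₀' (hLP₀ y hy)
    rw [← hqdef, hGC4] at h
    exact h
  have hx₀hull := hLP₀ x₀ hx₀L
  -- projection bounds for L
  have keyL : ∀ l ∈ L,
      (ip l ustar - ip x₀ ustar ≤ (1 + C4) * q) ∧
      (ip l (-ustar) - ip x₀ (-ustar) ≤ (1 + C4) * q) ∧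
      (ip l ul - ip x₀ ul ≤ (1 + C4) * q) ∧
      (ip l ur - ip x₀ ur ≤ (1 + C4) * q) := by
    intro l hl
    have h := hull_pair_proj G P₀.finite_toSet hz₀' (hLP₀ l hl) hx₀hull
    rw [← hqdef, hGu1, hGu2, hGu3, hGu4, hGC4] at h
    exact h
  have hMsupL1 : Msup ustar L ≤ (1 + C4) * q + ip x₀ ustar :=
    Msup_le hLne (fun l hl => by linarith [(keyL l hl).1])
  have hMsupL2 : Msup (-ustar) L ≤ (1 + C4) * q + ip x₀ (-ustar) :=
    Msup_le hLne (fun l hl => by linarith [(keyL l hl).2.1])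
  have hMsupL3 : Msup ul L ≤ (1 + C4) * q + ip x₀ ul :=
    Msup_le hLne (fun l hl => by linarith [(keyL l hl).2.2.1])
  have hMsupL4 : Msup ur L ≤ (1 + C4) * q + ip x₀ ur :=
    Msup_le hLne (fun l hl => by linarith [(keyL l hl).2.2.2])
  -- by minimality of the droplet D, D does not extend past L by more than 1
  have hDproj : ∀ w, unitVec w → w ∈ T → ∀ x ∈ D, ip x w ≤ Msup w L + 1 := by
    intro w hw hwT x hxD
    by_contra hgt
    push_neg at hgt
    obtain ⟨aw, haw1, haw2⟩ := rep_exists w hw (Msup w L)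
    set awf : (ℝ × ℝ) → Site := fun v => if v = w then aw else aD v with hawf
    have hawfw : awf w = aw := by simp [hawf]
    have hawfu : ∀ u, u ≠ w → awf u = aD u := by
      intro u hu
      simp [hawf, hu]
    set D'' : Set Site := ⋂ u ∈ T, {p : Site | ip (p - awf u) u < 0} with hD''def
    have hD''mem : ∀ p : Site, p ∈ D'' ↔ ∀ u ∈ T, ip (p - awf u) u < 0 := fun p => by
      rw [hD''def]
      exact Set.mem_iInter₂
    have hLD'' : L ⊆ D'' := by
      intro l hl
      apply (hD''mem l).2
      intro u huT'
      by_cases hu : u = w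
      · subst hu
        show ip (l - awf u) u < 0
        rw [hawfw, ip_sub]
        have hlip : ip l u ≤ Msup u L := le_Msup hLfin hl u
        linarith
      · show ip (l - awf u) u < 0
        rw [hawfu u hu]
        exact (hDmem l).1 (hLD hl) u huT'
    have hDsub : D ⊆ D'' := hmin D'' ⟨⟨x₀, hLD'' hx₀L⟩, awf, hD''def⟩ hLD''
    have hxin := (hD''mem x).1 (hDsub hxD) w hwT
    rw [hawfw, ip_sub] at hxin
    linarith
  obtain ⟨B, hBdef⟩ : ∃ x : ℝ, x = (1 + C4) * q + 2 := ⟨_, rfl⟩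
  have hDdir : ∀ x ∈ D,
      (ip x ustar - ip x₀ ustar ≤ B) ∧ (ip x (-ustar) - ip x₀ (-ustar) ≤ B) ∧
      (ip x ul - ip x₀ ul ≤ B) ∧ (ip x ur - ip x₀ ur ≤ B) := by
    intro x hx
    have d1 := hDproj ustar hu1 huT x hx
    have d2 := hDproj (-ustar) hu2 hnuT x hx
    have d3 := hDproj ul hu3 hulT x hx
    have d4 := hDproj ur hu4 hurT x hx
    rw [hBdef]
    exact ⟨by linarith, by linarith, by linarith, by linarith⟩
  have hDdist : ∀ x ∈ D, dist2 x x₀ ≤ C4 * B := by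
    intro x hx
    obtain ⟨e1, e2, e3, e4⟩ := hDdir x hx
    exact hPS x x₀ B e1 e2 e3 e4
  have hDpair : ∀ x ∈ D, ∀ y ∈ D, dist2 x y ≤ C4 * ((1 + C4) * B) := by
    intro x hx y hy
    obtain ⟨e1, e2, e3, e4⟩ := hDdir x hx
    have hdy := hDdist y hy
    have a1 := abs_le.1 (abs_ip_le y x₀ ustar hu1)
    have a2 := abs_le.1 (abs_ip_le y x₀ (-ustar) hu2)
    have a3 := abs_le.1 (abs_ip_le y x₀ ul hu3)
    have a4 := abs_le.1 (abs_ip_le y x₀ ur hu4)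
    apply hPS x y ((1 + C4) * B)
    · linarith [a1.1]
    · linarith [a2.1]
    · linarith [a3.1]
    · linarith [a4.1]
  have hn1cast : (1:ℝ) ≤ (n:ℝ) := by exact_mod_cast hn1
  have hq_le : q ≤ c5 G / lmin G * (n : ℝ) := by
    rw [hqdef]
    have h1 : pot G (↑P₀ : Set Site) ≤ c5 G * (n:ℝ) := by
      have h2 : c5 G * ((n:ℝ) - 1) ≤ c5 G * (n:ℝ) :=
        mul_le_mul_of_nonneg_left (by linarith) hc5pos.le
      linarith
    calc pot G (↑P₀ : Set Site) / lmin G ≤ (c5 G * (n:ℝ)) / lmin G :=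
          (div_le_div_iff_of_pos_right hlminpos).2 h1
      _ = c5 G / lmin G * (n : ℝ) := by ring
  have hBle : B ≤ ((1 + C4) * (c5 G / lmin G) + 2) * (n:ℝ) := by
    rw [hBdef]
    have hmul := mul_le_mul_of_nonneg_left hq_le hf1.le
    have hexp : ((1 + C4) * (c5 G / lmin G) + 2) * (n:ℝ)
        = (1 + C4) * (c5 G / lmin G * (n:ℝ)) + 2 * (n:ℝ) := by ring
    rw [hexp]
    linarith
  have hdiam : diam2 D ≤ C8 * (n:ℝ) := by
    unfold diam2
    refine csSup_le ⟨dist2 x₁ x₁, ⟨x₁, hx₁, x₁, hx₁, rfl⟩⟩ ?_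
    rintro d ⟨x, hx, y, hy, rfl⟩
    have h1 := hDpair x hx y hy
    have h2 : C4 * ((1 + C4) * B) ≤ C8 * (n:ℝ) := by
      rw [hC8def]
      calc C4 * ((1 + C4) * B) = (C4 * (1 + C4)) * B := by ring
        _ ≤ (C4 * (1 + C4)) * (((1 + C4) * (c5 G / lmin G) + 2) * (n:ℝ)) :=
            mul_le_mul_of_nonneg_left hBle (by positivity)
        _ = C4 * (1 + C4) * ((1 + C4) * (c5 G / lmin G) + 2) * (n:ℝ) := by ring
    linarith
  rw [hncard]
  have hfin := mul_le_mul_of_nonneg_left hdiam (inv_nonneg.2 hC8pos.le)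
  calc C8⁻¹ * diam2 D ≤ C8⁻¹ * (C8 * (n:ℝ)) := hfin
    _ = (n:ℝ) := by field_simp

end BP
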